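/- (Proposition 2, uniform strong law.) For any fixed segmentation R : P → Fin m, almost surely sup_{μ ∈ Θ(R)} | (1/n)·Σ_{t=1}^n l((R,μ); X_t) − L(R,μ) | → 0 as n → ∞; and the same almost-sure uniform convergence holds with l and L replaced by their gradients in μ, and with l and L replaced by their Hessians in μ. -/

import Mathlib

open MeasureTheory ProbabilityTheory Filter Topology

/-- The reduced Poisson log-likelihood of a count array `x` under segmentation `R`
and rates `μ`: `l((R,μ); x) = Σ_w Σ_i (x(i,w)·log μ(R i, w) − μ(R i, w))`. -/
noncomputable def loglik {NI NW m : ℕ} (R : Fin NI → Fin m)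
    (μ : Fin m × Fin NW → ℝ) (x : Fin NI × Fin NW → ℕ) : ℝ :=
  ∑ w : Fin NW, ∑ i : Fin NI, ((x (i, w) : ℝ) * Real.log (μ (R i, w)) - μ (R i, w))

/-- Gradient of `l((R,μ); x)` in `μ`: its `(h,w)` entry is
`Σ_{i : R i = h} (x(i,w)/μ(h,w) − 1)`. -/
noncomputable def loglikGrad {NI NW m : ℕ} (R : Fin NI → Fin m)
    (μ : Fin m × Fin NW → ℝ) (x : Fin NI × Fin NW → ℕ) :
    Fin m × Fin NW → ℝ :=
  fun hw => ∑ i : Fin NI,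
    if R i = hw.1 then ((x (i, hw.2) : ℝ) / μ hw - 1) else 0

/-- Diagonal of the Hessian of `l((R,μ); x)` in `μ`: its `(h,w)` entry is
`−Σ_{i : R i = h} x(i,w)/μ(h,w)²`. -/
noncomputable def loglikHess {NI NW m : ℕ} (R : Fin NI → Fin m)
    (μ : Fin m × Fin NW → ℝ) (x : Fin NI × Fin NW → ℕ) :
    Fin m × Fin NW → ℝ :=
  fun hw => -∑ i : Fin NI,
    if R i = hw.1 then (x (i, hw.2) : ℝ) / (μ hw) ^ 2 else 0

/-- The expected log-likelihood `L(R,μ)` when the true per-pixel rates are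
`λ°(i,w) = μ°(R° i, w)`. -/
noncomputable def expLoglik {NI NW m0 m : ℕ} (R0 : Fin NI → Fin m0)
    (μ0 : Fin m0 × Fin NW → ℝ) (R : Fin NI → Fin m) (μ : Fin m × Fin NW → ℝ) : ℝ :=
  ∑ w : Fin NW, ∑ i : Fin NI, (μ0 (R0 i, w) * Real.log (μ (R i, w)) - μ (R i, w))

/-- Gradient of `L(R,μ)` in `μ`. -/
noncomputable def expLoglikGrad {NI NW m0 m : ℕ} (R0 : Fin NI → Fin m0)
    (μ0 : Fin m0 × Fin NW → ℝ) (R : Fin NI → Fin m) (μ : Fin m × Fin NW → ℝ) :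
    Fin m × Fin NW → ℝ :=
  fun hw => ∑ i : Fin NI,
    if R i = hw.1 then (μ0 (R0 i, hw.2) / μ hw - 1) else 0

/-- Diagonal of the Hessian of `L(R,μ)` in `μ`. -/
noncomputable def expLoglikHess {NI NW m0 m : ℕ} (R0 : Fin NI → Fin m0)
    (μ0 : Fin m0 × Fin NW → ℝ) (R : Fin NI → Fin m) (μ : Fin m × Fin NW → ℝ) :
    Fin m × Fin NW → ℝ :=
  fun hw => -∑ i : Fin NI,
    if R i = hw.1 then μ0 (R0 i, hw.2) / (μ hw) ^ 2 else 0

/-- The compact parameter box `Θ(R) = [C_d, C_u]^(Fin m × Fin N_W)`. -/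
def Theta (Cd Cu : ℝ) (m NW : ℕ) : Set (Fin m × Fin NW → ℝ) :=
  {μ | ∀ p, μ p ∈ Set.Icc Cd Cu}

section PoissonAux

open Real NNReal ENNReal

lemma poisson_hasSum_mean (r : ℝ≥0) :
    HasSum (fun n : ℕ => (n : ℝ) * poissonPMFReal r n) r := by
  have h0 : (fun n : ℕ => ((n + 1 : ℕ) : ℝ) * poissonPMFReal r (n + 1))
      = fun n : ℕ => (r : ℝ) * poissonPMFReal r n := by
    ext n
    unfold poissonPMFReal
    rw [Nat.factorial_succ, pow_succ]
    have h1 : (n : ℝ) + 1 ≠ 0 := by positivity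
    have h2 : (Nat.factorial n : ℝ) ≠ 0 := Nat.cast_ne_zero.mpr (Nat.factorial_ne_zero n)
    push_cast
    field_simp
  have h1 : HasSum (fun n : ℕ => ((n + 1 : ℕ) : ℝ) * poissonPMFReal r (n + 1)) r := by
    rw [h0]
    simpa [poissonPMFReal] using (poissonPMFRealSum r).mul_left (r : ℝ)
  have h2 := (hasSum_nat_add_iff (f := fun n : ℕ => (n : ℝ) * poissonPMFReal r n) 1).mp h1
  simpa using h2

lemma poisson_integrable (r : ℝ≥0) :
    Integrable (fun n : ℕ => (n : ℝ)) (poissonMeasure r) := by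
  have hsum : Summable (fun n : ℕ => (n : ℝ) * poissonPMFReal r n) :=
    (poisson_hasSum_mean r).summable
  refine ⟨measurable_from_top.aestronglyMeasurable, ?_⟩
  show (∫⁻ (n : ℕ), (‖(n : ℝ)‖₊ : ℝ≥0∞) ∂(poissonMeasure r)) < ⊤
  calc ∫⁻ (n : ℕ), (‖(n : ℝ)‖₊ : ℝ≥0∞) ∂(poissonMeasure r)
      = ∑' n : ℕ, (‖(n : ℝ)‖₊ : ℝ≥0∞) * poissonMeasure r {n} := lintegral_countable' _
    _ = ∑' n : ℕ, ENNReal.ofReal ((n : ℝ) * poissonPMFReal r n) := by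
        refine tsum_congr fun n => ?_
        unfold poissonMeasure
        rw [Measure.sum_smul_dirac_singleton]
        change _ * ENNReal.ofReal (poissonPMFReal r n) = _
        rw [ENNReal.ofReal_mul (Nat.cast_nonneg n)]
        congr 1
        simp
    _ = ENNReal.ofReal r := by
        rw [← ENNReal.ofReal_tsum_of_nonneg
          (fun n => mul_nonneg (Nat.cast_nonneg n) poissonPMFReal_nonneg) hsum,
          (poisson_hasSum_mean r).tsum_eq]
    _ < ⊤ := ENNReal.ofReal_lt_top

lemma poisson_mean (r : ℝ≥0) : ∫ n, (n : ℝ) ∂(poissonMeasure r) = r := by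
  rw [integral_poissonMeasure]
  have : ∀ n : ℕ, (Real.exp (-(r : ℝ)) * (r : ℝ) ^ n / (Nat.factorial n)) • (n : ℝ)
      = (n : ℝ) * poissonPMFReal r n := by
    intro n
    rw [smul_eq_mul, mul_comm]
    rfl
  rw [tsum_congr this, (poisson_hasSum_mean r).tsum_eq]

end PoissonAux

/-- Proposition 2 (uniform strong law of large numbers): for i.i.d. count arrays
with independent Poisson entries, the normalized sample log-likelihood (and its
gradient and Hessian in `μ`) converge to the expected log-likelihood (gradient,
Hessian), almost surely uniformly over the compact box `Θ(R)`. -/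
theorem prop2_uniform_slln
    {NI NW m0 m : ℕ} (Cd Cu : ℝ) (hCd : 0 < Cd) (hCdCu : Cd ≤ Cu)
    (R0 : Fin NI → Fin m0) (hR0surj : ∀ h, ∃ i, R0 i = h)
    (μ0 : Fin m0 × Fin NW → ℝ) (hA1 : ∀ p, μ0 p ∈ Set.Icc Cd Cu)
    (R : Fin NI → Fin m)
    {Ω : Type*} [MeasurableSpace Ω] (Pr : Measure Ω) [IsProbabilityMeasure Pr]
    (X : ℕ → Ω → Fin NI × Fin NW → ℕ)
    (hmeas : ∀ t p, Measurable fun ω => X t ω p)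
    (hindep : iIndepFun
      (fun (q : ℕ × (Fin NI × Fin NW)) ω => X q.1 ω q.2) Pr)
    (hlaw : ∀ t p, Measure.map (fun ω => X t ω p) Pr
      = poissonMeasure (μ0 (R0 p.1, p.2)).toNNReal) :
    ∀ᵐ ω ∂Pr,
      (Tendsto (fun n : ℕ => ⨆ μ : Theta Cd Cu m NW,
          |(1 / (n : ℝ)) * ∑ t ∈ Finset.Icc 1 n, loglik R μ.1 (X t ω)
            - expLoglik R0 μ0 R μ.1|) atTop (𝓝 0)) ∧
      (Tendsto (fun n : ℕ => ⨆ μ : Theta Cd Cu m NW,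
          ‖(1 / (n : ℝ)) • ∑ t ∈ Finset.Icc 1 n, loglikGrad R μ.1 (X t ω)
            - expLoglikGrad R0 μ0 R μ.1‖) atTop (𝓝 0)) ∧
      (Tendsto (fun n : ℕ => ⨆ μ : Theta Cd Cu m NW,
          ‖(1 / (n : ℝ)) • ∑ t ∈ Finset.Icc 1 n, loglikHess R μ.1 (X t ω)
            - expLoglikHess R0 μ0 R μ.1‖) atTop (𝓝 0)) := by
  classical
  have hμ0nn : ∀ p, 0 ≤ μ0 p := fun p => le_trans hCd.le (hA1 p).1
  -- SLLN for each coordinate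
  have hslln : ∀ p : Fin NI × Fin NW, ∀ᵐ ω ∂Pr,
      Tendsto (fun n : ℕ => (∑ t ∈ Finset.Icc 1 n, (X t ω p : ℝ)) / n) atTop
        (𝓝 (μ0 (R0 p.1, p.2))) := by
    intro p
    set Y : ℕ → Ω → ℝ := fun t ω => (X (t + 1) ω p : ℝ) with hY
    have hYmeas : ∀ t : ℕ, Measurable (fun ω => X t ω p) := fun t => hmeas t p
    have hmapY : ∀ t, Measure.map (Y t) Pr
        = Measure.map (fun k : ℕ => (k : ℝ)) (poissonMeasure (μ0 (R0 p.1, p.2)).toNNReal) := by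
      intro t
      have : Y t = (fun k : ℕ => (k : ℝ)) ∘ (fun ω => X (t + 1) ω p) := rfl
      rw [this, ← Measure.map_map measurable_from_top (hYmeas (t + 1)), hlaw]
    have hint : Integrable (Y 0) Pr := by
      have h1 : Integrable (fun k : ℕ => (k : ℝ))
          (Measure.map (fun ω => X 1 ω p) Pr) := by
        rw [hlaw]; exact poisson_integrable _
      exact (integrable_map_measure measurable_from_top.aestronglyMeasurable
        (hYmeas 1).aemeasurable).mp h1
    have hindep' : Pairwise (Function.onFun (IndepFun · · Pr) Y) := by
      intro s t hst
      have hne : ((s + 1 : ℕ), p) ≠ ((t + 1 : ℕ), p) := by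
        simp only [ne_eq, Prod.mk.injEq, not_and]
        intro h; omega
      exact (hindep.indepFun hne).comp measurable_from_top measurable_from_top
    have hident : ∀ t, IdentDistrib (Y t) (Y 0) Pr Pr :=
      fun t => ⟨(measurable_from_top.comp (hYmeas (t + 1))).aemeasurable,
        (measurable_from_top.comp (hYmeas 1)).aemeasurable, by rw [hmapY, hmapY]⟩
    have hE : ∫ ω, Y 0 ω ∂Pr = μ0 (R0 p.1, p.2) := by
      have h1 := integral_map (μ := Pr) (φ := fun ω => X 1 ω p)
        (f := fun k : ℕ => (k : ℝ)) (hYmeas 1).aemeasurable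
        measurable_from_top.aestronglyMeasurable
      rw [hlaw, poisson_mean, Real.coe_toNNReal _ (hμ0nn _)] at h1
      exact h1.symm
    have hSL := strong_law_ae_real Y hint hindep' hident
    filter_upwards [hSL] with ω hω
    rw [hE] at hω
    refine hω.congr fun n => ?_
    congr 1
    rw [← Finset.Ico_add_one_right_eq_Icc, Finset.sum_Ico_eq_sum_range]
    simp only [Nat.add_sub_cancel]
    exact Finset.sum_congr rfl fun t _ => by rw [add_comm]
  have hAE : ∀ᵐ ω ∂Pr, ∀ p : Fin NI × Fin NW,
      Tendsto (fun n : ℕ => (∑ t ∈ Finset.Icc 1 n, (X t ω p : ℝ)) / n) atTop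
        (𝓝 (μ0 (R0 p.1, p.2))) := by
    rw [ae_all_iff]; exact hslln
  filter_upwards [hAE] with ω hω
  -- empirical averages and their deviations
  set A : ℕ → Fin NI → Fin NW → ℝ :=
    fun n i w => (∑ t ∈ Finset.Icc 1 n, (X t ω (i, w) : ℝ)) / n with hA
  set B : ℕ → ℝ := fun n => ∑ w : Fin NW, ∑ i : Fin NI, |A n i w - μ0 (R0 i, w)| with hBdef
  have hBnn : ∀ n, 0 ≤ B n := fun n =>
    Finset.sum_nonneg fun w _ => Finset.sum_nonneg fun i _ => abs_nonneg _
  have hB : Tendsto B atTop (𝓝 0) := by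
    have h0 : Tendsto B atTop (𝓝 (∑ w : Fin NW, ∑ i : Fin NI, (0 : ℝ))) := by
      refine tendsto_finset_sum _ fun w _ => tendsto_finset_sum _ fun i _ => ?_
      have := ((hω (i, w)).sub (tendsto_const_nhds (x := μ0 (R0 i, w)))).abs
      simpa using this
    simpa using h0
  have hDsum : ∀ n (w : Fin NW), ∑ i : Fin NI, |A n i w - μ0 (R0 i, w)| ≤ B n := by
    intro n w
    exact Finset.single_le_sum
      (f := fun w => ∑ i : Fin NI, |A n i w - μ0 (R0 i, w)|)
      (fun w _ => Finset.sum_nonneg fun i _ => abs_nonneg _) (Finset.mem_univ w)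
  -- key identities
  have hcard : ∀ n : ℕ, (Finset.Icc 1 n).card = n := fun n => by
    rw [Nat.card_Icc]; omega
  have keyA : ∀ n : ℕ, (n : ℝ) ≠ 0 → ∀ μ : Fin m × Fin NW → ℝ,
      (1 / (n : ℝ)) * ∑ t ∈ Finset.Icc 1 n, loglik R μ (X t ω)
        - expLoglik R0 μ0 R μ
      = ∑ w : Fin NW, ∑ i : Fin NI,
          (A n i w - μ0 (R0 i, w)) * Real.log (μ (R i, w)) := by
    intro n hn μ
    unfold loglik expLoglik
    rw [Finset.sum_comm, Finset.mul_sum, ← Finset.sum_sub_distrib]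
    refine Finset.sum_congr rfl fun w _ => ?_
    rw [Finset.sum_comm, Finset.mul_sum, ← Finset.sum_sub_distrib]
    refine Finset.sum_congr rfl fun i _ => ?_
    rw [Finset.sum_sub_distrib, Finset.sum_const, hcard, nsmul_eq_mul, ← Finset.sum_mul]
    simp only [hA]
    field_simp
    ring
  have keyB : ∀ n : ℕ, (n : ℝ) ≠ 0 → ∀ μ : Fin m × Fin NW → ℝ,
      (∀ p, μ p ≠ 0) → ∀ hw : Fin m × Fin NW,
      ((1 / (n : ℝ)) • ∑ t ∈ Finset.Icc 1 n, loglikGrad R μ (X t ω)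
        - expLoglikGrad R0 μ0 R μ) hw
      = ∑ i : Fin NI, if R i = hw.1 then
          (A n i hw.2 - μ0 (R0 i, hw.2)) / μ hw else 0 := by
    intro n hn μ hμne hw
    simp only [Pi.sub_apply, Pi.smul_apply, Finset.sum_apply, smul_eq_mul,
      loglikGrad, expLoglikGrad]
    rw [Finset.sum_comm, Finset.mul_sum, ← Finset.sum_sub_distrib]
    refine Finset.sum_congr rfl fun i _ => ?_
    by_cases h : R i = hw.1
    · simp only [h, if_true]
      rw [Finset.sum_sub_distrib, Finset.sum_const, hcard, nsmul_eq_mul, ← Finset.sum_div]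
      simp only [hA]
      have := hμne hw
      field_simp
      ring
    · simp [h]
  have keyC : ∀ n : ℕ, (n : ℝ) ≠ 0 → ∀ μ : Fin m × Fin NW → ℝ,
      (∀ p, μ p ≠ 0) → ∀ hw : Fin m × Fin NW,
      ((1 / (n : ℝ)) • ∑ t ∈ Finset.Icc 1 n, loglikHess R μ (X t ω)
        - expLoglikHess R0 μ0 R μ) hw
      = -∑ i : Fin NI, if R i = hw.1 then
          (A n i hw.2 - μ0 (R0 i, hw.2)) / (μ hw) ^ 2 else 0 := by
    intro n hn μ hμne hw
    simp only [Pi.sub_apply, Pi.smul_apply, Finset.sum_apply, smul_eq_mul,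
      loglikHess, expLoglikHess]
    rw [Finset.sum_neg_distrib, mul_neg, sub_neg_eq_add, neg_add_eq_sub, ← neg_sub]
    congr 1
    rw [Finset.sum_comm, Finset.mul_sum, ← Finset.sum_sub_distrib]
    refine Finset.sum_congr rfl fun i _ => ?_
    by_cases h : R i = hw.1
    · simp only [h, if_true]
      rw [← Finset.sum_div]
      simp only [hA]
      have := hμne hw
      field_simp
    · simp [h]
  -- bound on |log μ| over [Cd, Cu]
  set K : ℝ := |Real.log Cd| + |Real.log Cu| with hK
  have hK0 : 0 ≤ K := add_nonneg (abs_nonneg _) (abs_nonneg _)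
  have hlogbound : ∀ x : ℝ, Cd ≤ x → x ≤ Cu → |Real.log x| ≤ K := by
    intro x h1 h2
    have hx : 0 < x := lt_of_lt_of_le hCd h1
    have l1 : Real.log Cd ≤ Real.log x := Real.log_le_log hCd h1
    have l2 : Real.log x ≤ Real.log Cu := Real.log_le_log hx h2
    rw [abs_le]
    constructor
    · have := neg_abs_le (Real.log Cd)
      have := abs_nonneg (Real.log Cu)
      simp only [hK]; linarith
    · have := le_abs_self (Real.log Cu)
      have := abs_nonneg (Real.log Cd)
      simp only [hK]; linarith
  have hμfacts : ∀ μ : Theta Cd Cu m NW, ∀ p, Cd ≤ μ.1 p ∧ μ.1 p ≤ Cu ∧ μ.1 p ≠ 0 := by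
    intro μ p
    obtain ⟨h1, h2⟩ := μ.2 p
    exact ⟨h1, h2, ne_of_gt (lt_of_lt_of_le hCd h1)⟩
  refine ⟨?_, ?_, ?_⟩
  · -- log-likelihood
    apply squeeze_zero' (g := fun n => K * B n)
    · exact Eventually.of_forall fun n => Real.iSup_nonneg fun μ => abs_nonneg _
    · filter_upwards [eventually_ge_atTop 1] with n hn
      have hn' : (n : ℝ) ≠ 0 := Nat.cast_ne_zero.mpr (by omega)
      refine Real.iSup_le (fun μ => ?_) (mul_nonneg hK0 (hBnn n))
      rw [keyA n hn' μ.1]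
      calc |∑ w : Fin NW, ∑ i : Fin NI,
              (A n i w - μ0 (R0 i, w)) * Real.log (μ.1 (R i, w))|
          ≤ ∑ w : Fin NW, ∑ i : Fin NI,
              |(A n i w - μ0 (R0 i, w)) * Real.log (μ.1 (R i, w))| :=
            (Finset.abs_sum_le_sum_abs _ _).trans
              (Finset.sum_le_sum fun w _ => Finset.abs_sum_le_sum_abs _ _)
        _ ≤ ∑ w : Fin NW, ∑ i : Fin NI, |A n i w - μ0 (R0 i, w)| * K := by
            refine Finset.sum_le_sum fun w _ => Finset.sum_le_sum fun i _ => ?_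
            rw [abs_mul]
            exact mul_le_mul_of_nonneg_left
              (hlogbound _ (hμfacts μ (R i, w)).1 (hμfacts μ (R i, w)).2.1)
              (abs_nonneg _)
        _ = K * B n := by
            rw [hBdef, Finset.mul_sum]
            refine Finset.sum_congr rfl fun w _ => ?_
            rw [Finset.mul_sum]
            exact Finset.sum_congr rfl fun i _ => mul_comm _ _
    · simpa using hB.const_mul K
  · -- gradient
    apply squeeze_zero' (g := fun n => B n / Cd)
    · exact Eventually.of_forall fun n => Real.iSup_nonneg fun μ => norm_nonneg _
    · filter_upwards [eventually_ge_atTop 1] with n hn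
      have hn' : (n : ℝ) ≠ 0 := Nat.cast_ne_zero.mpr (by omega)
      refine Real.iSup_le (fun μ => ?_) (div_nonneg (hBnn n) hCd.le)
      rw [pi_norm_le_iff_of_nonneg (div_nonneg (hBnn n) hCd.le)]
      intro hw
      rw [Real.norm_eq_abs, keyB n hn' μ.1 (fun p => (hμfacts μ p).2.2) hw]
      calc |∑ i : Fin NI, if R i = hw.1 then
              (A n i hw.2 - μ0 (R0 i, hw.2)) / μ.1 hw else 0|
          ≤ ∑ i : Fin NI, |A n i hw.2 - μ0 (R0 i, hw.2)| / Cd := by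
            refine (Finset.abs_sum_le_sum_abs _ _).trans
              (Finset.sum_le_sum fun i _ => ?_)
            by_cases h : R i = hw.1
            · simp only [h, if_true]
              rw [abs_div, abs_of_pos (lt_of_lt_of_le hCd (hμfacts μ hw).1)]
              gcongr
              exact (hμfacts μ hw).1
            · simp only [h, if_false, abs_zero]
              positivity
        _ = (∑ i : Fin NI, |A n i hw.2 - μ0 (R0 i, hw.2)|) / Cd := by
            rw [Finset.sum_div]
        _ ≤ B n / Cd := by gcongr; exact hDsum n hw.2
    · simpa using hB.div_const Cd
  · -- Hessian
    apply squeeze_zero' (g := fun n => B n / Cd ^ 2)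
    · exact Eventually.of_forall fun n => Real.iSup_nonneg fun μ => norm_nonneg _
    · filter_upwards [eventually_ge_atTop 1] with n hn
      have hn' : (n : ℝ) ≠ 0 := Nat.cast_ne_zero.mpr (by omega)
      have hCd2 : (0:ℝ) < Cd ^ 2 := by positivity
      refine Real.iSup_le (fun μ => ?_) (div_nonneg (hBnn n) hCd2.le)
      rw [pi_norm_le_iff_of_nonneg (div_nonneg (hBnn n) hCd2.le)]
      intro hw
      rw [Real.norm_eq_abs, keyC n hn' μ.1 (fun p => (hμfacts μ p).2.2) hw, abs_neg]
      calc |∑ i : Fin NI, if R i = hw.1 then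
              (A n i hw.2 - μ0 (R0 i, hw.2)) / (μ.1 hw) ^ 2 else 0|
          ≤ ∑ i : Fin NI, |A n i hw.2 - μ0 (R0 i, hw.2)| / Cd ^ 2 := by
            refine (Finset.abs_sum_le_sum_abs _ _).trans
              (Finset.sum_le_sum fun i _ => ?_)
            by_cases h : R i = hw.1
            · simp only [h, if_true]
              have hμpos : 0 < μ.1 hw := lt_of_lt_of_le hCd (hμfacts μ hw).1
              have h1 := (hμfacts μ hw).1
              rw [abs_div, abs_of_pos (pow_pos hμpos 2)]
              gcongr
            · simp only [h, if_false, abs_zero]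
              positivity
        _ = (∑ i : Fin NI, |A n i hw.2 - μ0 (R0 i, hw.2)|) / Cd ^ 2 := by
            rw [Finset.sum_div]
        _ ≤ B n / Cd ^ 2 := by gcongr; exact hDsum n hw.2
    · simpa using hB.div_const (Cd ^ 2)
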